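/- arXiv:2501.12091 — 2 statements merged into one kernel-verified Lean document; each statement's English description precedes it below -/
import Mathlib

section
/- Let S be a seminormal affine monoid whose algebra R = k[S] is F-split, D a RUF of C, and suppose π_a(x^u) = x^w ≠ 0 with w ∈ S ∩ D, where a ∈ (1/q)M gives π_a ∈ Hom_R(F^e_*R, R) and u ∈ (1/q)S. Then a ∈ span(D) and u ∈ D. -/
noncomputable section


noncomputable section

def emb (d : ℕ) : (Fin d → ℤ) →+ (Fin d → ℝ) where
  toFun m := fun i => (m i : ℝ)
  map_zero' := by ext i; simp
  map_add' x y := by ext i; simp [Pi.add_apply]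

def IsFace (d : ℕ) (C D : Set (Fin d → ℝ)) : Prop :=
  ∃ u : (Fin d → ℝ) →ₗ[ℝ] ℝ, (∀ x ∈ C, 0 ≤ u x) ∧ D = {x ∈ C | u x = 0}

def latticeOf (d : ℕ) (S : AddSubmonoid (Fin d → ℤ)) (D : Set (Fin d → ℝ)) :
    AddSubgroup (Fin d → ℤ) :=
  AddSubgroup.closure ((S : Set (Fin d → ℤ)) ∩ (emb d) ⁻¹' D)

def latIn (d : ℕ) (D : Set (Fin d → ℝ)) : AddSubgroup (Fin d → ℤ) :=
  AddSubgroup.comap (emb d) (Submodule.span ℝ D).toAddSubgroup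

def IsRelSat (d : ℕ) (S : AddSubmonoid (Fin d → ℤ)) (C D : Set (Fin d → ℝ)) : Prop :=
  IsFace d C D ∧ D ≠ C ∧
    latticeOf d S D =
      (⨅ D' ∈ {D' : Set (Fin d → ℝ) | IsFace d C D' ∧ D ⊂ D'}, latticeOf d S D') ⊓ latIn d D

def IsRUF (d : ℕ) (S : AddSubmonoid (Fin d → ℤ)) (C D : Set (Fin d → ℝ)) : Prop :=
  IsFace d C D ∧ ¬ IsRelSat d S C D

def Seminormal (d : ℕ) (S : AddSubmonoid (Fin d → ℤ)) (C : Set (Fin d → ℝ)) : Prop :=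
  ∀ D : Set (Fin d → ℝ), IsFace d C D →
    ∀ m : Fin d → ℤ, emb d m ∈ intrinsicInterior ℝ D → (m ∈ S ↔ m ∈ latticeOf d S D)

def coneOf (d : ℕ) (S : AddSubmonoid (Fin d → ℤ)) : Set (Fin d → ℝ) :=
  ↑(Submodule.span NNReal (emb d '' (S : Set (Fin d → ℤ))))

def pFace (d p : ℕ) (S : AddSubmonoid (Fin d → ℤ)) (D : Set (Fin d → ℝ)) : Prop :=
  p ∣ (latticeOf d S D).relIndex (latIn d D)

def Mtilde (d p : ℕ) (S : AddSubmonoid (Fin d → ℤ)) (D : Set (Fin d → ℝ)) : Set (Fin d → ℤ) :=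
  {x | x ∈ latIn d D ∧ ∃ m : ℤ, IsCoprime m (p : ℤ) ∧ m • x ∈ latticeOf d S D}

set_option linter.unusedSectionVars false
set_option linter.unnecessarySimpa false
set_option maxHeartbeats 1000000

section Aux
variable {E : Type*} [NormedAddCommGroup E] [NormedSpace ℝ E] [FiniteDimensional ℝ E]


theorem mem_nnspan_iff {ι : Type*} [Fintype ι] (g : ι → E) (x : E) :
    x ∈ Submodule.span NNReal (Set.range g) ↔
      ∃ c : ι → ℝ, (∀ i, 0 ≤ c i) ∧ ∑ i, c i • g i = x := by
  rw [Submodule.mem_span_range_iff_exists_fun]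
  constructor
  · rintro ⟨c, hc⟩
    exact ⟨fun i => (c i : ℝ), fun i => (c i).2, by simpa [NNReal.smul_def] using hc⟩
  · rintro ⟨c, hc0, hc⟩
    refine ⟨fun i => ⟨c i, hc0 i⟩, ?_⟩
    exact hc

theorem caratheodory_cone {ι : Type*} [Fintype ι] (g : ι → E) (x : E)
    (c : ι → ℝ) (hc0 : ∀ i, 0 ≤ c i) (hx : ∑ i, c i • g i = x) :
    ∃ t : Finset ι, LinearIndependent ℝ (fun i : t => g i) ∧
      ∃ c' : ι → ℝ, (∀ i, 0 ≤ c' i) ∧ (∀ i ∉ t, c' i = 0) ∧ ∑ i, c' i • g i = x := by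
  classical
  generalize hn : (Finset.univ.filter (fun i => c i ≠ 0)).card = n
  induction n using Nat.strong_induction_on generalizing c with
  | _ n ih =>
  set t := Finset.univ.filter (fun i => c i ≠ 0) with ht
  have hct : ∀ i ∉ t, c i = 0 := fun i hi => by
    by_contra h; exact hi (Finset.mem_filter.2 ⟨Finset.mem_univ _, h⟩)
  by_cases hli : LinearIndependent ℝ (fun i : t => g i)
  · exact ⟨t, hli, c, hc0, hct, hx⟩
  · obtain ⟨f, hfsum, i₀, hfi₀⟩ := Fintype.not_linearIndependent_iff.1 hli
    set F : ι → ℝ := fun i => if h : i ∈ t then f ⟨i, h⟩ else 0 with hF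
    have hFt : ∀ i ∉ t, F i = 0 := fun i hi => by simp [hF, hi]
    have h1 : ∑ i ∈ t, F i • g i = 0 := by
      rw [← hfsum, ← Finset.sum_attach t (fun i => F i • g i)]
      refine Finset.sum_congr rfl fun i _ => ?_
      simp [hF, i.2]
    have hFsum : ∑ i : ι, F i • g i = 0 := by
      rw [← Finset.sum_subset (Finset.subset_univ t)
        (fun i _ hi => by rw [hFt i hi, zero_smul])]
      exact h1
    have hi₀t : (i₀ : ι) ∈ t := i₀.2
    have hFi₀ : F (i₀ : ι) ≠ 0 := by simpa [hF, i₀.2] using hfi₀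
    -- WLOG some coordinate of the relation is positive
    obtain ⟨G, hGt, hGsum, i₁, hi₁t, hGi₁⟩ :
        ∃ G : ι → ℝ, (∀ i ∉ t, G i = 0) ∧ (∑ i : ι, G i • g i = 0) ∧
          ∃ i₁, i₁ ∈ t ∧ 0 < G i₁ := by
      rcases lt_or_ge 0 (F i₀) with h | h
      · exact ⟨F, hFt, hFsum, i₀, hi₀t, h⟩
      · refine ⟨-F, fun i hi => by simp [hFt i hi], by simp [hFsum], i₀, hi₀t, ?_⟩
        simp only [Pi.neg_apply, neg_pos]
        exact lt_of_le_of_ne h hFi₀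
    -- minimize c i / G i over positive G i
    have hs : (t.filter (fun i => 0 < G i)).Nonempty :=
      ⟨i₁, Finset.mem_filter.2 ⟨hi₁t, hGi₁⟩⟩
    obtain ⟨i₂, hi₂, hmin⟩ := Finset.exists_min_image _ (fun i => c i / G i) hs
    obtain ⟨hi₂t, hGi₂⟩ := Finset.mem_filter.1 hi₂
    set r := c i₂ / G i₂ with hr
    have hr0 : 0 ≤ r := div_nonneg (hc0 _) hGi₂.le
    set c' : ι → ℝ := fun i => c i - r * G i with hc'
    have hc'0 : ∀ i, 0 ≤ c' i := by
      intro i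
      rcases le_or_gt (G i) 0 with h | h
      · have : r * G i ≤ 0 := mul_nonpos_of_nonneg_of_nonpos hr0 h
        simp only [hc']; linarith [hc0 i]
      · have hit : i ∈ t.filter (fun i => 0 < G i) := by
          refine Finset.mem_filter.2 ⟨?_, h⟩
          by_contra hnt
          rw [hGt i hnt] at h; exact lt_irrefl _ h
        have := hmin i hit
        have h2 : r * G i ≤ c i := by
          rw [div_le_div_iff₀ hGi₂ h] at this
          calc r * G i = c i₂ / G i₂ * G i := by rw [hr]
          _ ≤ c i := by
            rw [div_mul_eq_mul_div, div_le_iff₀ hGi₂]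
            linarith [this]
        simp only [hc']; linarith
    have hc'i₂ : c' i₂ = 0 := by
      simp only [hc', hr]
      field_simp
      ring
    have hc'sum : ∑ i, c' i • g i = x := by
      simp only [hc', sub_smul, mul_smul, Finset.sum_sub_distrib, ← Finset.smul_sum, hGsum,
        smul_zero, sub_zero, hx]
    have hsupp : Finset.univ.filter (fun i => c' i ≠ 0) ⊆ t.erase i₂ := by
      intro i hi
      rw [Finset.mem_filter] at hi
      refine Finset.mem_erase.2 ⟨?_, ?_⟩
      · rintro rfl; exact hi.2 hc'i₂
      · by_contra hnt
        exact hi.2 (by simp only [hc', hct i hnt, hGt i hnt, mul_zero, sub_zero])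
    have hcard : (Finset.univ.filter (fun i => c' i ≠ 0)).card < n := by
      calc (Finset.univ.filter (fun i => c' i ≠ 0)).card ≤ (t.erase i₂).card :=
            Finset.card_le_card hsupp
        _ < t.card := Finset.card_erase_lt_of_mem hi₂t
        _ = n := hn
    exact ih _ hcard c' hc'0 hc'sum rfl

theorem real_smul_eq_nnreal_smul (a : ℝ) (ha : 0 ≤ a) (y : E) :
    a • y = (⟨a, ha⟩ : NNReal) • y := by
  rfl

theorem nnspan_isClosed {ι : Type*} [Fintype ι] (g : ι → E) :
    IsClosed (Submodule.span NNReal (Set.range g) : Set E) := by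
  classical
  set Φ : ∀ t : Finset ι, ((↥t → ℝ) →ₗ[ℝ] E) := fun t =>
    { toFun := fun c => ∑ i : ↥t, c i • g i
      map_add' := fun c₁ c₂ => by simp [add_smul, Finset.sum_add_distrib]
      map_smul' := fun r c => by simp [mul_smul, Finset.smul_sum] } with hΦ
  have key : (Submodule.span NNReal (Set.range g) : Set E) =
      ⋃ t : {t : Finset ι // LinearIndependent ℝ (fun i : t => g i)},
        (Φ t) '' {c | ∀ i, 0 ≤ c i} := by
    ext x
    simp only [Set.mem_iUnion, Set.mem_image, SetLike.mem_coe, hΦ, LinearMap.coe_mk,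
      AddHom.coe_mk]
    constructor
    · intro hx
      obtain ⟨c, hc0, hc⟩ := (mem_nnspan_iff g x).1 hx
      obtain ⟨t, hli, c', hc'0, hc't, hc'⟩ := caratheodory_cone g x c hc0 hc
      refine ⟨⟨t, hli⟩, fun i => c' i, fun i => hc'0 i, ?_⟩
      calc ∑ i : ↥t, c' (i : ι) • g (i : ι) = ∑ i ∈ t, c' i • g i :=
            Finset.sum_attach t (fun i => c' i • g i)
        _ = ∑ i : ι, c' i • g i := Finset.sum_subset (Finset.subset_univ t)
            (fun i _ hi => by rw [hc't i hi, zero_smul])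
        _ = x := hc'
    · rintro ⟨t, c, hc0, rfl⟩
      refine Submodule.sum_mem _ fun i _ => ?_
      have h2 : c i • g (i : ι) = (⟨c i, hc0 i⟩ : NNReal) • g (i : ι) :=
        real_smul_eq_nnreal_smul _ (hc0 i) _
      rw [h2]
      exact Submodule.smul_mem _ _ (Submodule.subset_span ⟨i, rfl⟩)
  rw [key]
  refine isClosed_iUnion_of_finite fun t => ?_
  have hker : LinearMap.ker (Φ (t : Finset ι)) = ⊥ := by
    rw [LinearMap.ker_eq_bot']
    intro c hc
    have hc2 : ∑ i : ↥(t : Finset ι), c i • g (i : ι) = 0 := hc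
    have := Fintype.linearIndependent_iff.1 t.2 c hc2
    funext i; exact this i
  have hclosed : Topology.IsClosedEmbedding (Φ (t : Finset ι)) :=
    LinearMap.isClosedEmbedding_of_injective hker
  have horth : IsClosed {c : ↥(t : Finset ι) → ℝ | ∀ i, 0 ≤ c i} := by
    have he : {c : ↥(t : Finset ι) → ℝ | ∀ i, 0 ≤ c i} = ⋂ i, {c | 0 ≤ c i} := by
      ext; simp [Set.mem_iInter]
    rw [he]
    exact isClosed_iInter fun i => isClosed_le continuous_const (continuous_apply i)
  exact hclosed.isClosedMap _ horth

theorem farkas {ι : Type*} [Fintype ι] (g : ι → E) (x : E)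
    (hx : x ∉ Submodule.span NNReal (Set.range g)) :
    ∃ v : E →ₗ[ℝ] ℝ, (∀ i, 0 ≤ v (g i)) ∧ v x < 0 := by
  have hconv : Convex ℝ (Submodule.span NNReal (Set.range g) : Set E) := by
    intro y hy z hz a b ha hb _
    exact Submodule.add_mem _
      (by rw [real_smul_eq_nnreal_smul a ha y]
          exact Submodule.smul_mem _ _ hy)
      (by rw [real_smul_eq_nnreal_smul b hb z]
          exact Submodule.smul_mem _ _ hz)
  obtain ⟨f, u, hfx, hfK⟩ := geometric_hahn_banach_point_closed hconv (nnspan_isClosed g) hx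
  have hu0 : u < 0 := by simpa using hfK 0 (Submodule.zero_mem _)
  refine ⟨f.toLinearMap, fun i => ?_, by simpa using hfx.trans hu0⟩
  by_contra h
  push_neg at h
  have hT : (0:ℝ) ≤ u / f (g i) := div_nonneg_iff.2 (Or.inr ⟨hu0.le, h.le⟩)
  have hmem : (u / f (g i)) • g i ∈ (Submodule.span NNReal (Set.range g) : Set E) := by
    rw [real_smul_eq_nnreal_smul _ hT (g i)]
    exact Submodule.smul_mem _ _ (Submodule.subset_span ⟨i, rfl⟩)
  have := hfK _ hmem
  rw [map_smul, smul_eq_mul, div_mul_cancel₀] at this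
  · exact lt_irrefl _ this
  · exact h.ne


theorem real_smul_eq_nnreal_smul' (a : ℝ) (ha : 0 ≤ a) (y : E) :
    a • y = (⟨a, ha⟩ : NNReal) • y := by
  rfl

theorem nnspan_subset_span {X : Set E} :
    (Submodule.span NNReal X : Set E) ⊆ ↑(Submodule.span ℝ X) := by
  intro x hx
  induction hx using Submodule.span_induction with
  | mem x h => exact Submodule.subset_span h
  | zero => exact Submodule.zero_mem _
  | add x y _ _ hx hy => exact Submodule.add_mem _ hx hy
  | smul c x _ hx => rw [NNReal.smul_def]; exact Submodule.smul_mem _ _ hx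

theorem sum_nonneg_smul_mem_nnspan {ι : Type*} [Fintype ι] {g : ι → E}
    {c : ι → ℝ} (hc : ∀ i, 0 ≤ c i) :
    ∑ i, c i • g i ∈ Submodule.span NNReal (Set.range g) := by
  refine Submodule.sum_mem _ fun i _ => ?_
  rw [real_smul_eq_nnreal_smul' _ (hc i)]
  exact Submodule.smul_mem _ _ (Submodule.subset_span ⟨i, rfl⟩)

theorem allpos_mem_intrinsicInterior {ι : Type*} [Fintype ι] (g : ι → E)
    (ν : ι → ℝ) (hν : ∀ i, 0 < ν i) (x : E) (hx : ∑ i, ν i • g i = x) :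
    x ∈ intrinsicInterior ℝ (Submodule.span NNReal (Set.range g) : Set E) := by
  classical
  set K : Set E := (Submodule.span NNReal (Set.range g) : Set E) with hK
  set W : Submodule ℝ E := Submodule.span ℝ (Set.range g) with hW
  have hKW : K ⊆ (W : Set E) := nnspan_subset_span
  have hxK : x ∈ K := hx ▸ sum_nonneg_smul_mem_nnspan (fun i => (hν i).le)
  -- the linear parametrization of W
  set φ : (ι → ℝ) →ₗ[ℝ] E :=
    { toFun := fun c => ∑ i, c i • g i
      map_add' := fun c₁ c₂ => by simp [add_smul, Finset.sum_add_distrib]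
      map_smul' := fun r c => by simp [mul_smul, Finset.smul_sum] } with hφ
  have hφW : ∀ c, φ c ∈ W := fun c => Submodule.sum_mem _ fun i _ =>
    Submodule.smul_mem _ _ (Submodule.subset_span ⟨i, rfl⟩)
  set φ' : (ι → ℝ) →ₗ[ℝ] W := φ.codRestrict W hφW with hφ'
  have hsurj : Function.Surjective φ' := by
    rintro ⟨y, hy⟩
    obtain ⟨c, hc⟩ := (Submodule.mem_span_range_iff_exists_fun ℝ).1 hy
    exact ⟨c, Subtype.ext hc⟩
  set φ'' := LinearMap.toContinuousLinearMap φ' with hφ''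
  have hopen : IsOpenMap φ'' := ContinuousLinearMap.isOpenMap φ'' hsurj
  set U₀ : Set (ι → ℝ) := {c | ∀ i, 0 < c i} with hU₀
  have hU₀open : IsOpen U₀ := by
    have : U₀ = ⋂ i, {c : ι → ℝ | 0 < c i} := by ext; simp [hU₀, Set.mem_iInter]
    rw [this]
    exact isOpen_iInter_of_finite fun i => isOpen_lt continuous_const (continuous_apply i)
  have hV'open : IsOpen (φ'' '' U₀) := hopen _ hU₀open
  obtain ⟨O, hOopen, hOpre⟩ := isOpen_induced_iff.1 hV'open
  have hxW : x ∈ W := hKW hxK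
  have hxV' : (⟨x, hxW⟩ : W) ∈ φ'' '' U₀ := ⟨ν, hν, Subtype.ext hx⟩
  have hxO : x ∈ O := by
    have : (⟨x, hxW⟩ : W) ∈ Subtype.val ⁻¹' O := hOpre ▸ hxV'
    exact this
  have hOWK : ∀ y, y ∈ O → y ∈ W → y ∈ K := by
    intro y hyO hyW
    have : (⟨y, hyW⟩ : W) ∈ φ'' '' U₀ := hOpre ▸ hyO
    obtain ⟨c, hcU, hc⟩ := this
    have hyc : ∑ i, c i • g i = y := congrArg Subtype.val hc
    exact hyc ▸ sum_nonneg_smul_mem_nnspan (fun i => (hcU i).le)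
  -- now conclude
  have hxaff : x ∈ affineSpan ℝ K := subset_affineSpan ℝ K hxK
  have haffW : (affineSpan ℝ K : Set E) ⊆ (W : Set E) := by
    have : affineSpan ℝ K ≤ W.toAffineSubspace := affineSpan_le.2 (by
      intro y hy
      exact (Submodule.mem_toAffineSubspace).2 (hKW hy))
    intro y hy
    exact (Submodule.mem_toAffineSubspace).1 (this hy)
  rw [mem_intrinsicInterior]
  refine ⟨⟨x, hxaff⟩, ?_, rfl⟩
  rw [mem_interior]
  refine ⟨Subtype.val ⁻¹' O, ?_, hOopen.preimage continuous_subtype_val, hxO⟩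
  intro z hz
  exact hOWK z.1 hz (haffW z.2)


theorem nonneg_on_nnspan {X : Set E} (L : E →ₗ[ℝ] ℝ) (hL : ∀ x ∈ X, 0 ≤ L x)
    {x : E} (hx : x ∈ Submodule.span NNReal X) : 0 ≤ L x := by
  induction hx using Submodule.span_induction with
  | mem x h => exact hL x h
  | zero => simp
  | add x y _ _ hx hy => rw [map_add]; positivity
  | smul c x _ hx =>
      rw [NNReal.smul_def, map_smul, smul_eq_mul]
      exact mul_nonneg c.2 hx

theorem face_decomp {X : Set E} (L : E →ₗ[ℝ] ℝ) (hL : ∀ x ∈ X, 0 ≤ L x)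
    {x : E} (hx : x ∈ Submodule.span NNReal X) (hx0 : L x = 0) :
    x ∈ Submodule.span NNReal {y ∈ X | L y = 0} := by
  have key : ∀ z ∈ Submodule.span NNReal X,
      0 ≤ L z ∧ (L z = 0 → z ∈ Submodule.span NNReal {y ∈ X | L y = 0}) := by
    intro z hz
    induction hz using Submodule.span_induction with
    | mem y h => exact ⟨hL y h, fun h0 => Submodule.subset_span ⟨h, h0⟩⟩
    | zero => exact ⟨by simp, fun _ => Submodule.zero_mem _⟩
    | add y z _ _ hy hz =>
        refine ⟨by rw [map_add]; exact add_nonneg hy.1 hz.1, fun h0 => ?_⟩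
        rw [map_add] at h0
        have hy0 : L y = 0 := le_antisymm (by linarith [hy.1, hz.1]) hy.1
        have hz0 : L z = 0 := by linarith [hy.1, hz.1]
        exact Submodule.add_mem _ (hy.2 hy0) (hz.2 hz0)
    | smul c y _ hy =>
        have hLc : L (c • y) = (c : ℝ) * L y := by
          rw [NNReal.smul_def, map_smul, smul_eq_mul]
        rw [hLc]
        refine ⟨mul_nonneg c.2 hy.1, fun h0 => ?_⟩
        rcases mul_eq_zero.1 h0 with h | h
        · have hc : c = 0 := by ext; exact h
          rw [hc, zero_smul]
          exact Submodule.zero_mem _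
        · exact Submodule.smul_mem _ _ (hy.2 h)
  exact (key x hx).2 hx0

end Aux
/-- Lemma (in-the-face): let `S` be a seminormal affine monoid whose algebra is F-split
(no face of `C` is a `p`-face), `D` a RUF of `C`, and suppose `π_a(x^u) = x^w ≠ 0` with
`w ∈ S ∩ D`, where `a ∈ (1/q)ℤ^d` gives `π_a ∈ Hom_R(F^e_* R, R)` (i.e.
`(a + (1/q)S) ∩ M ⊆ S`) and `u ∈ (1/q)S`, with `q = p^e`.  Then `a ∈ span D` and
`u ∈ D`.  (`a, u` are encoded by numerator vectors: `π_a(x^u) = x^w` reads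
`a + u = q • w`.) -/
theorem stmt_14 (d : ℕ) (p : ℕ) (hp : p.Prime) (e : ℕ) (q : ℕ) (hq : q = p ^ e)
    (S : AddSubmonoid (Fin d → ℤ)) (hfg : S.FG)
    (hZ : AddSubgroup.closure (S : Set (Fin d → ℤ)) = ⊤)
    (C : Set (Fin d → ℝ)) (hC : C = coneOf d S)
    (hpointed : ∀ x ∈ C, -x ∈ C → x = 0)
    (hsn : Seminormal d S C)
    (hFsplit : ∀ D' : Set (Fin d → ℝ), IsFace d C D' → ¬ pFace d p S D')
    (D : Set (Fin d → ℝ)) (hruf : IsRUF d S C D)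
    (a u w : Fin d → ℤ) (hu : u ∈ S) (hw : w ∈ S) (hwD : emb d w ∈ D)
    (heq : ∀ i, a i + u i = (q : ℤ) * w i)
    (hhom : ∀ s ∈ S, (∀ i, (q : ℤ) ∣ a i + s i) →
      (fun i => (a i + s i) / (q : ℤ)) ∈ S) :
    emb d a ∈ Submodule.span ℝ D ∧ emb d u ∈ D := by
  classical
  obtain ⟨hface, hnotrelsat⟩ := hruf
  obtain ⟨ℓ, hℓpos, hDeq⟩ := hface
  have hq0 : 0 < q := hq ▸ pow_pos hp.pos e
  have hSC : ∀ s' ∈ S, emb d s' ∈ C := by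
    intro s' hs'
    rw [hC]
    exact Submodule.subset_span (Set.mem_image_of_mem _ hs')
  have huC : emb d u ∈ C := hSC u hu
  suffices huD : emb d u ∈ D by
    refine ⟨?_, huD⟩
    have ha : emb d a = (q : ℝ) • emb d w - emb d u := by
      funext i
      have := heq i
      simp only [emb, AddMonoidHom.coe_mk, ZeroHom.coe_mk, Pi.sub_apply, Pi.smul_apply,
        smul_eq_mul]
      push_cast [show a i = (q:ℤ) * w i - u i by linarith]
      ring
    rw [ha]
    exact Submodule.sub_mem _ (Submodule.smul_mem _ _ (Submodule.subset_span hwD))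
      (Submodule.subset_span huD)
  by_contra huD
  have hℓu : 0 < ℓ (emb d u) := by
    rcases lt_or_eq_of_le (hℓpos _ huC) with h | h
    · exact h
    · exact absurd (hDeq ▸ (⟨huC, h.symm⟩ : emb d u ∈ {x ∈ C | ℓ x = 0})) huD
  -- extract the RUF witness m
  have hDC : D ≠ C := fun h => huD (h ▸ huC)
  have hlt : latticeOf d S D <
      (⨅ D' ∈ {D' : Set (Fin d → ℝ) | IsFace d C D' ∧ D ⊂ D'}, latticeOf d S D') ⊓
        latIn d D := by
    refine lt_of_le_of_ne (le_inf ?_ ?_) ?_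
    · refine le_iInf fun D' => le_iInf fun hD' => AddSubgroup.closure_mono ?_
      exact Set.inter_subset_inter_right _ (Set.preimage_mono hD'.2.subset)
    · rw [latticeOf, AddSubgroup.closure_le]
      rintro x ⟨hxS, hxD⟩
      show x ∈ latIn d D
      rw [latIn, AddSubgroup.mem_comap]
      exact Submodule.subset_span hxD
    · intro hcontra
      exact hnotrelsat ⟨⟨ℓ, hℓpos, hDeq⟩, hDC, hcontra⟩
  obtain ⟨m, hmRHS, hmnot⟩ := SetLike.exists_of_lt hlt
  have hmlatIn : emb d m ∈ Submodule.span ℝ D := by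
    have := (AddSubgroup.mem_inf.1 hmRHS).2
    rw [latIn, AddSubgroup.mem_comap] at this
    exact this
  have hmInf : ∀ D', IsFace d C D' → D ⊂ D' → m ∈ latticeOf d S D' := by
    intro D' h1 h2
    have := (AddSubgroup.mem_inf.1 hmRHS).1
    rw [AddSubgroup.mem_iInf] at this
    have := this D'
    rw [AddSubgroup.mem_iInf] at this
    exact this ⟨h1, h2⟩
  -- generators
  obtain ⟨T, hT⟩ := hfg
  have hTS : ∀ τ ∈ T, τ ∈ S := fun τ h => by
    rw [← hT]; exact AddSubmonoid.subset_closure h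
  set ι := {τ : Fin d → ℤ // τ ∈ T} with hι
  set g : ι → (Fin d → ℝ) := fun τ => emb d ↑τ with hg
  have hgapp : ∀ i : ι, g i = emb d ↑i := fun i => by rw [hg]
  have hembS : ∀ s' ∈ S, emb d s' ∈ Submodule.span NNReal (Set.range g) := by
    intro s' hs'
    rw [← hT] at hs'
    induction hs' using AddSubmonoid.closure_induction with
    | mem τ hτ => exact Submodule.subset_span ⟨⟨τ, hτ⟩, hgapp ⟨τ, hτ⟩⟩
    | zero => rw [map_zero]; exact Submodule.zero_mem _
    | add y z _ _ hy hz => rw [map_add]; exact Submodule.add_mem _ hy hz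
  have hCg : C = ↑(Submodule.span NNReal (Set.range g)) := by
    rw [hC]; unfold coneOf
    apply Set.Subset.antisymm
    · intro x hx
      have hle : Submodule.span NNReal (emb d '' (S : Set (Fin d → ℤ))) ≤
          Submodule.span NNReal (Set.range g) := by
        rw [Submodule.span_le]
        rintro _ ⟨s', hs', rfl⟩
        exact hembS s' hs'
      exact hle hx
    · intro x hx
      have hle : Submodule.span NNReal (Set.range g) ≤
          Submodule.span NNReal (emb d '' (S : Set (Fin d → ℤ))) := by
        rw [Submodule.span_le]
        rintro _ ⟨τ, rfl⟩
        exact Submodule.subset_span ⟨↑τ, hTS _ τ.2, (hgapp τ).symm⟩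
      exact hle hx
  have hgC : ∀ i : ι, g i ∈ C := fun i => by rw [hgapp]; exact hSC _ (hTS _ i.2)
  have hnonnegC : ∀ v : (Fin d → ℝ) →ₗ[ℝ] ℝ, (∀ i : ι, 0 ≤ v (g i)) →
      ∀ x ∈ C, 0 ≤ v x := by
    intro v hv x hx
    rw [hCg] at hx
    exact nonneg_on_nnspan v (by rintro y ⟨i, rfl⟩; exact hv i) hx
  classical
  set TD : Finset ι := Finset.univ.filter (fun i : ι => ℓ (g i) = 0) with hTD
  set w₀ : Fin d → ℤ := ∑ i ∈ TD, (i : Fin d → ℤ) with hw₀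
  have hw₀S : w₀ ∈ S := AddSubmonoid.sum_mem _ fun i _ => hTS _ i.2
  have hembw₀ : emb d w₀ = ∑ i ∈ TD, g i := by
    rw [hw₀, map_sum]
    try exact Finset.sum_congr rfl fun i _ => (hgapp i).symm
  have hℓw₀ : ℓ (emb d w₀) = 0 := by
    rw [hembw₀, map_sum]
    exact Finset.sum_eq_zero fun i hi => (Finset.mem_filter.1 hi).2
  have hw₀D : emb d w₀ ∈ D := by
    rw [hDeq]; exact ⟨hSC _ hw₀S, hℓw₀⟩
  set x₀ : Fin d → ℝ := emb d u + emb d w₀ with hx₀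
  set V : Set ((Fin d → ℝ) →ₗ[ℝ] ℝ) := {v | (∀ i : ι, 0 ≤ v (g i)) ∧ v x₀ = 0} with hV
  have hVsplit : ∀ v ∈ V, v (emb d u) = 0 ∧ ∀ i ∈ TD, v (g i) = 0 := by
    intro v hv
    have h1 : 0 ≤ v (emb d u) := hnonnegC v hv.1 _ huC
    have h2 : ∀ i ∈ TD, 0 ≤ v (g i) := fun i _ => hv.1 i
    have h3 : v (emb d u) + ∑ i ∈ TD, v (g i) = 0 := by
      rw [← map_sum, ← hembw₀, ← map_add]; exact hv.2
    have h4 : 0 ≤ ∑ i ∈ TD, v (g i) := Finset.sum_nonneg h2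
    refine ⟨by linarith, fun i hi => ?_⟩
    have h5 : ∑ i ∈ TD, v (g i) = 0 := by linarith
    exact (Finset.sum_eq_zero_iff_of_nonneg h2).1 h5 i hi
  set I : Set ι := {i | ∀ v ∈ V, v (g i) = 0} with hI
  have hIDI : ∀ i ∈ TD, i ∈ I := fun i hi v hv => (hVsplit v hv).2 i hi
  have hchoice : ∀ i : ι, i ∉ I → ∃ v ∈ V, 0 < v (g i) := by
    intro i hi
    rw [hI, Set.mem_setOf_eq] at hi
    push_neg at hi
    obtain ⟨v, hv1, hv2⟩ := hi
    exact ⟨v, hv1, lt_of_le_of_ne (hv1.1 i) (Ne.symm hv2)⟩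
  set F : ι → ((Fin d → ℝ) →ₗ[ℝ] ℝ) := fun i =>
    if h : i ∈ I then 0 else (hchoice i h).choose with hF
  have hFV : ∀ i : ι, (∀ j : ι, 0 ≤ F i (g j)) ∧ F i x₀ = 0 := by
    intro i
    simp only [hF]
    split_ifs with h
    · simp
    · exact ⟨((hchoice i h).choose_spec.1).1, ((hchoice i h).choose_spec.1).2⟩
  have hFpos : ∀ i : ι, i ∉ I → 0 < F i (g i) := by
    intro i h
    simp only [hF, dif_neg h]
    exact (hchoice i h).choose_spec.2
  have hFI : ∀ i j : ι, j ∈ I → F i (g j) = 0 := by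
    intro i j hj
    simp only [hF]
    split_ifs with h
    · simp
    · exact hj _ (hchoice i h).choose_spec.1
  set vstar : (Fin d → ℝ) →ₗ[ℝ] ℝ := ∑ i : ι, F i with hvstar
  have hvs_apply : ∀ x, vstar x = ∑ i : ι, F i x := fun x => by
    rw [hvstar, LinearMap.coe_sum, Finset.sum_apply]
  have hvs_nonneg : ∀ j : ι, 0 ≤ vstar (g j) := fun j => by
    rw [hvs_apply]; exact Finset.sum_nonneg fun i _ => (hFV i).1 j
  have hvs_x₀ : vstar x₀ = 0 := by
    rw [hvs_apply]; exact Finset.sum_eq_zero fun i _ => (hFV i).2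
  have hvs_zero_iff : ∀ j : ι, vstar (g j) = 0 ↔ j ∈ I := by
    intro j
    constructor
    · intro h0
      by_contra hj
      have h1 : ∀ i ∈ Finset.univ, 0 ≤ F i (g j) := fun i _ => (hFV i).1 j
      rw [hvs_apply] at h0
      have h2 := (Finset.sum_eq_zero_iff_of_nonneg h1).1 h0 j (Finset.mem_univ j)
      exact absurd h2 (ne_of_gt (hFpos j hj))
    · intro hj
      rw [hvs_apply]
      exact Finset.sum_eq_zero fun i _ => hFI i j hj
  have hvsC : ∀ x ∈ C, 0 ≤ vstar x := hnonnegC vstar hvs_nonneg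
  set G' : Set (Fin d → ℝ) := {x ∈ C | vstar x = 0} with hG'
  have hG'face : IsFace d C G' := ⟨vstar, hvsC, rfl⟩
  have hvs_u : vstar (emb d u) = 0 := by
    have h1 : 0 ≤ vstar (emb d u) := hvsC _ huC
    have h2 : 0 ≤ vstar (emb d w₀) := hvsC _ (hSC _ hw₀S)
    have h3 : vstar (emb d u) + vstar (emb d w₀) = 0 := by
      rw [← map_add]; exact hvs_x₀
    linarith
  have huG' : emb d u ∈ G' := ⟨huC, hvs_u⟩
  have hDG' : D ⊆ G' := by
    intro x hx
    have hxC : x ∈ C := by rw [hDeq] at hx; exact hx.1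
    refine ⟨hxC, ?_⟩
    have hx1 : x ∈ Submodule.span NNReal (Set.range g) := by rw [hCg] at hxC; exact hxC
    have hxℓ : ℓ x = 0 := by rw [hDeq] at hx; exact hx.2
    have h1 := face_decomp ℓ (by rintro y ⟨i, rfl⟩; exact hℓpos _ (hgC i)) hx1 hxℓ
    have h2 : Submodule.span ℝ {y ∈ Set.range g | ℓ y = 0} ≤ LinearMap.ker vstar := by
      rw [Submodule.span_le]
      rintro _ ⟨⟨i, rfl⟩, hy⟩
      have hiTD : i ∈ TD := Finset.mem_filter.2 ⟨Finset.mem_univ _, hy⟩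
      exact (hvs_zero_iff i).2 (hIDI i hiTD)
    exact h2 (nnspan_subset_span h1)
  have hDG'ssub : D ⊂ G' := by
    rw [Set.ssubset_def]
    exact ⟨hDG', fun h => huD (h huG')⟩
  have hmG' : m ∈ latticeOf d S G' := hmInf G' hG'face hDG'ssub
  haveI : Fintype I := Fintype.ofFinite I
  set gI : I → (Fin d → ℝ) := fun i => g i with hgI
  have hG'cone : G' = ↑(Submodule.span NNReal (Set.range gI)) := by
    apply Set.Subset.antisymm
    · rintro x ⟨hxC, hx0⟩
      have hx1 : x ∈ Submodule.span NNReal (Set.range g) := by rw [hCg] at hxC; exact hxC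
      have h1 := face_decomp vstar (by rintro y ⟨i, rfl⟩; exact hvs_nonneg i) hx1 hx0
      have h2 : {y ∈ Set.range g | vstar y = 0} ⊆ Set.range gI := by
        rintro _ ⟨⟨i, rfl⟩, h0⟩
        exact ⟨⟨i, (hvs_zero_iff i).1 h0⟩, rfl⟩
      exact Submodule.span_mono h2 h1
    · intro x hx
      refine ⟨?_, ?_⟩
      · rw [hCg]
        exact Submodule.span_mono (by rintro y ⟨i, rfl⟩; exact ⟨i.1, rfl⟩) hx
      · have h3 : Submodule.span ℝ (Set.range gI) ≤ LinearMap.ker vstar := by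
          rw [Submodule.span_le]
          rintro _ ⟨i, rfl⟩
          exact (hvs_zero_iff i.1).2 i.2
        exact h3 (nnspan_subset_span hx)
  -- representations of x₀
  have hx₀span : x₀ ∈ Submodule.span NNReal (Set.range g) := by
    have h1 : emb d u ∈ Submodule.span NNReal (Set.range g) := by rw [hCg] at huC; exact huC
    have h2 : emb d w₀ ∈ Submodule.span NNReal (Set.range g) := by
      have h3 := hSC _ hw₀S; rw [hCg] at h3; exact h3
    exact Submodule.add_mem _ h1 h2
  set Rep : Set (ι → ℝ) := {c | (∀ i, 0 ≤ c i) ∧ ∑ i, c i • g i = x₀} with hRep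
  have hRepne : Rep.Nonempty := by
    obtain ⟨c, hc0, hcs⟩ := (mem_nnspan_iff g x₀).1 hx₀span
    exact ⟨c, hc0, hcs⟩
  have hsuppI : ∀ c ∈ Rep, ∀ i : ι, c i ≠ 0 → i ∈ I := by
    intro c hc i hci
    have h0 : ∑ j, c j * vstar (g j) = 0 := by
      have e1 : vstar (∑ j, c j • g j) = ∑ j, c j * vstar (g j) := by
        rw [map_sum]
        exact Finset.sum_congr rfl fun j _ => by rw [map_smul, smul_eq_mul]
      rw [← e1, hc.2, hvs_x₀]
    have h1 : ∀ j ∈ Finset.univ, 0 ≤ c j * vstar (g j) := fun j _ =>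
      mul_nonneg (hc.1 j) (hvs_nonneg j)
    have h2 := (Finset.sum_eq_zero_iff_of_nonneg h1).1 h0 i (Finset.mem_univ i)
    rcases mul_eq_zero.1 h2 with h | h
    · exact absurd h hci
    · exact (hvs_zero_iff i).1 h
  set suppF : (ι → ℝ) → Finset ι := fun c => Finset.univ.filter (fun i => c i ≠ 0) with hsuppF
  set 𝒥 : Set (Finset ι) := {J | ∃ c ∈ Rep, suppF c = J} with h𝒥
  have h𝒥fin : 𝒥.Finite := Set.toFinite _
  have h𝒥ne : 𝒥.Nonempty := ⟨suppF hRepne.choose, hRepne.choose, hRepne.choose_spec, rfl⟩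
  obtain ⟨Jstar, hJstar𝒥, hJstarmax⟩ :=
    Set.Finite.exists_maximalFor Finset.card 𝒥 h𝒥fin h𝒥ne
  obtain ⟨cstar, hcstarRep, hcstarsupp⟩ := hJstar𝒥
  have hsubJ : ∀ c ∈ Rep, suppF c ⊆ Jstar := by
    intro c hc
    set c2 : ι → ℝ := fun i => (c i + cstar i) / 2 with hc2
    have hc2Rep : c2 ∈ Rep := by
      constructor
      · intro i
        have h1 := hc.1 i; have h2 := hcstarRep.1 i
        simp only [hc2]; positivity
      · have e0 : ∀ i : ι, c2 i = 2⁻¹ * c i + 2⁻¹ * cstar i := fun i => by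
          simp only [hc2]; ring
        calc ∑ i, c2 i • g i
            = ∑ i, ((2⁻¹ * c i) • g i + (2⁻¹ * cstar i) • g i) := by
              exact Finset.sum_congr rfl fun i _ => by rw [e0, add_smul]
          _ = ∑ i, (2⁻¹ * c i) • g i + ∑ i, (2⁻¹ * cstar i) • g i :=
              Finset.sum_add_distrib
          _ = (2⁻¹ : ℝ) • (∑ i, c i • g i) + (2⁻¹ : ℝ) • (∑ i, cstar i • g i) := by
              rw [Finset.smul_sum, Finset.smul_sum]
              congr 1 <;> exact Finset.sum_congr rfl fun i _ => (mul_smul _ _ _)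
          _ = x₀ := by
              rw [hc.2, hcstarRep.2, ← add_smul]; norm_num
    have hunion : suppF c2 = suppF c ∪ suppF cstar := by
      ext i
      simp only [hsuppF, Finset.mem_filter, Finset.mem_union, Finset.mem_univ, true_and, hc2]
      constructor
      · intro hne
        by_contra hcon
        push_neg at hcon
        exact hne (by rw [hcon.1, hcon.2]; norm_num)
      · intro hor
        have h1 := hc.1 i; have h2 := hcstarRep.1 i
        have hpos : 0 < c i + cstar i := by
          rcases hor with h | h
          · have : 0 < c i := lt_of_le_of_ne h1 (Ne.symm h); linarith
          · have : 0 < cstar i := lt_of_le_of_ne h2 (Ne.symm h); linarith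
        positivity
    have hc2𝒥 : suppF c2 ∈ 𝒥 := ⟨c2, hc2Rep, rfl⟩
    have hJsub : Jstar ⊆ suppF c2 := by
      rw [hunion, ← hcstarsupp]
      exact Finset.subset_union_right
    have hcardeq := hJstarmax hc2𝒥 (Finset.card_le_card hJsub)
    have heq2 : Jstar = suppF c2 :=
      Finset.eq_of_subset_of_card_le hJsub hcardeq
    rw [hunion] at heq2
    rw [heq2]
    exact Finset.subset_union_left
  -- TD-indices lie in Jstar
  have hIDJ : ∀ i ∈ TD, i ∈ Jstar := by
    intro i hi
    have huspan : emb d u ∈ Submodule.span NNReal (Set.range g) := by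
      rw [hCg] at huC; exact huC
    obtain ⟨cu, hcu0, hcusum⟩ := (mem_nnspan_iff g (emb d u)).1 huspan
    set c0 : ι → ℝ := fun j => cu j + (if j ∈ TD then 1 else 0) with hc0
    have hc0Rep : c0 ∈ Rep := by
      constructor
      · intro j
        have h1 := hcu0 j
        simp only [hc0]
        split_ifs <;> linarith
      · calc ∑ j, c0 j • g j
            = ∑ j, (cu j • g j + (if j ∈ TD then (1:ℝ) else 0) • g j) :=
              Finset.sum_congr rfl fun j _ => by simp only [hc0]; rw [add_smul]
          _ = ∑ j, cu j • g j + ∑ j, (if j ∈ TD then (1:ℝ) else 0) • g j :=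
              Finset.sum_add_distrib
          _ = emb d u + ∑ j ∈ TD, g j := by
              rw [hcusum]
              congr 1
              simp only [ite_smul, one_smul, zero_smul]
              rw [Finset.sum_ite_mem, Finset.univ_inter]
          _ = x₀ := by rw [← hembw₀]
    have hin : i ∈ suppF c0 := by
      simp only [hsuppF, Finset.mem_filter, Finset.mem_univ, true_and, hc0, if_pos hi]
      have h1 := hcu0 i
      intro hcontra
      linarith
    exact hsubJ c0 hc0Rep hin
  -- every index of I lies in Jstar (Farkas)
  have hIJ : ∀ j : ι, j ∈ I → j ∈ Jstar := by
    intro j hj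
    by_cases hjJ : j ∈ Jstar
    · exact hjJ
    set h : (ι ⊕ (↥Jstar ⊕ ↥Jstar)) → (Fin d → ℝ) :=
      Sum.elim g (Sum.elim (fun i => g i) (fun i => -g i)) with hh
    by_cases hmem : -g j ∈ Submodule.span NNReal (Set.range h)
    · obtain ⟨cc, hcc0, hccsum⟩ := (mem_nnspan_iff h (-g j)).1 hmem
      rw [Fintype.sum_sum_type, Fintype.sum_sum_type] at hccsum
      set lam : ι → ℝ := fun i => cc (Sum.inl i) with hlam
      set bet : ι → ℝ := fun i =>
        if hm : i ∈ Jstar then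
          cc (Sum.inr (Sum.inl ⟨i, hm⟩)) - cc (Sum.inr (Sum.inr ⟨i, hm⟩)) else 0 with hbet
      have hbet0 : ∀ i ∉ Jstar, bet i = 0 := fun i hi => by
        simp only [hbet, dif_neg hi]
      have hkey : ∑ i : ι, (lam i + bet i) • g i = -g j := by
        have e1 : ∑ i : ι, (lam i + bet i) • g i
            = ∑ i : ι, lam i • g i + ∑ i : ι, bet i • g i := by
          rw [← Finset.sum_add_distrib]
          exact Finset.sum_congr rfl fun i _ => add_smul _ _ _
        have e2 : ∑ i : ι, bet i • g i
            = ∑ i ∈ Jstar, bet i • g i := by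
          symm
          apply Finset.sum_subset (Finset.subset_univ _)
          intro i _ hi
          rw [hbet0 i hi, zero_smul]
        have e3 : ∑ i ∈ Jstar, bet i • g i
            = ∑ i : ↥Jstar, (cc (Sum.inr (Sum.inl i)) - cc (Sum.inr (Sum.inr i))) • g ↑i := by
          rw [← Finset.sum_attach Jstar (fun i => bet i • g i)]
          refine Finset.sum_congr rfl fun i _ => ?_
          simp only [hbet, dif_pos i.2]
        have e4 : ∑ i : ↥Jstar, (cc (Sum.inr (Sum.inl i)) - cc (Sum.inr (Sum.inr i))) • g ↑i
            = ∑ i : ↥Jstar, cc (Sum.inr (Sum.inl i)) • g ↑i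
              - ∑ i : ↥Jstar, cc (Sum.inr (Sum.inr i)) • g ↑i := by
          rw [← Finset.sum_sub_distrib]
          exact Finset.sum_congr rfl fun i _ => sub_smul _ _ _
        rw [e1, e2, e3, e4]
        have e5 : ∑ i : ↥Jstar, cc (Sum.inr (Sum.inr i)) • h (Sum.inr (Sum.inr i))
            = - ∑ i : ↥Jstar, cc (Sum.inr (Sum.inr i)) • g ↑i := by
          rw [← Finset.sum_neg_distrib]
          refine Finset.sum_congr rfl fun i _ => ?_
          simp only [hh, Sum.elim_inr, Sum.elim_inl, smul_neg]
        have e6 : ∑ i : ι, cc (Sum.inl i) • h (Sum.inl i) = ∑ i : ι, lam i • g i := by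
          refine Finset.sum_congr rfl fun i _ => ?_
          simp only [hh, hlam, Sum.elim_inl]
        have e7 : ∑ i : ↥Jstar, cc (Sum.inr (Sum.inl i)) • h (Sum.inr (Sum.inl i))
            = ∑ i : ↥Jstar, cc (Sum.inr (Sum.inl i)) • g ↑i := by
          refine Finset.sum_congr rfl fun i _ => ?_
          simp only [hh, Sum.elim_inr, Sum.elim_inl]
        rw [e6, e7, e5] at hccsum
        linear_combination (norm := abel) hccsum
      -- perturb cstar
      have hJne : Jstar.Nonempty := by
        rcases Finset.eq_empty_or_nonempty Jstar with hJe | hJn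
        · exfalso
          have hzero : ∀ i : ι, cstar i = 0 := by
            intro i
            by_contra hne
            have : i ∈ suppF cstar :=
              Finset.mem_filter.2 ⟨Finset.mem_univ _, hne⟩
            rw [hcstarsupp, hJe] at this
            exact absurd this (Finset.notMem_empty i)
          have hx₀0 : x₀ = 0 := by
            rw [← hcstarRep.2]
            exact Finset.sum_eq_zero fun i _ => by rw [hzero i, zero_smul]
          have : ℓ x₀ = 0 := by rw [hx₀0, map_zero]
          have hℓx₀ : ℓ x₀ = ℓ (emb d u) := by
            rw [hx₀, map_add, hℓw₀, add_zero]
          rw [hℓx₀] at this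
          linarith
        · exact hJn
      obtain ⟨i₀, hi₀J, hi₀min⟩ := Finset.exists_min_image Jstar cstar hJne
      have hi₀pos : 0 < cstar i₀ := by
        have hi₀supp : i₀ ∈ suppF cstar := by rw [hcstarsupp]; exact hi₀J
        have := (Finset.mem_filter.1 hi₀supp).2
        exact lt_of_le_of_ne (hcstarRep.1 i₀) (Ne.symm this)
      set δ : ι → ℝ := fun i => (if i = j then 1 else 0) + lam i + bet i with hδ
      have hδsum : ∑ i, δ i • g i = 0 := by
        have e1 : ∑ i : ι, δ i • g i
            = ∑ i : ι, (if i = j then (1:ℝ) else 0) • g i + ∑ i : ι, (lam i + bet i) • g i := by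
          rw [← Finset.sum_add_distrib]
          refine Finset.sum_congr rfl fun i _ => ?_
          simp only [hδ]
          rw [add_assoc, add_smul]
        have e2 : ∑ i : ι, (if i = j then (1:ℝ) else 0) • g i = g j := by
          rw [Finset.sum_eq_single j]
          · rw [if_pos rfl, one_smul]
          · intro b _ hb; rw [if_neg hb, zero_smul]
          · intro hn; exact absurd (Finset.mem_univ j) hn
        rw [e1, e2, hkey]
        abel
      set B : ℝ := 1 + ∑ i, |δ i| with hB
      have hBpos : 0 < B := by
        have : 0 ≤ ∑ i, |δ i| := Finset.sum_nonneg fun i _ => abs_nonneg _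
        simp only [hB]; linarith
      set ε : ℝ := cstar i₀ / B with hε
      have hεpos : 0 < ε := div_pos hi₀pos hBpos
      set c' : ι → ℝ := fun i => cstar i + ε * δ i with hc'
      have hδabs : ∀ i : ι, |δ i| ≤ B := by
        intro i
        have h1 : |δ i| ≤ ∑ k, |δ k| :=
          Finset.single_le_sum (f := fun k => |δ k|) (fun k _ => abs_nonneg _)
            (Finset.mem_univ i)
        simp only [hB]; linarith
      have hc'Rep : c' ∈ Rep := by
        constructor
        · intro i
          by_cases hiJ : i ∈ Jstar
          · have h1 : cstar i₀ ≤ cstar i := hi₀min i hiJ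
            have h3 : -B ≤ δ i := (abs_le.1 (hδabs i)).1
            have h4 : ε * B = cstar i₀ := by
              simp only [hε]; field_simp
            simp only [hc']
            nlinarith
          · have h0 : cstar i = 0 := by
              by_contra hne
              exact hiJ (hcstarsupp ▸ Finset.mem_filter.2 ⟨Finset.mem_univ _, hne⟩)
            have hb := hbet0 i hiJ
            have hl : 0 ≤ lam i := hcc0 (Sum.inl i)
            have hind : (0:ℝ) ≤ if i = j then 1 else 0 := by positivity
            simp only [hc', hδ, h0, hb]
            nlinarith
        · calc ∑ i, c' i • g i
              = ∑ i, (cstar i • g i + (ε * δ i) • g i) :=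
                Finset.sum_congr rfl fun i _ => by simp only [hc']; rw [add_smul]
            _ = ∑ i, cstar i • g i + ∑ i, (ε * δ i) • g i := Finset.sum_add_distrib
            _ = x₀ + ε • ∑ i, δ i • g i := by
                rw [hcstarRep.2, Finset.smul_sum]
                congr 1
                exact Finset.sum_congr rfl fun i _ => (mul_smul _ _ _)
            _ = x₀ := by rw [hδsum, smul_zero, add_zero]
      have hc'j : c' j ≠ 0 := by
        have h0 : cstar j = 0 := by
          by_contra hne
          exact hjJ (hcstarsupp ▸ Finset.mem_filter.2 ⟨Finset.mem_univ _, hne⟩)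
        have hb := hbet0 j hjJ
        have hl : 0 ≤ lam j := hcc0 (Sum.inl j)
        simp only [hc', hδ, h0, hb, eq_self_iff_true, if_true]
        nlinarith
      have hjsupp : j ∈ suppF c' := Finset.mem_filter.2 ⟨Finset.mem_univ _, hc'j⟩
      exact hsubJ c' hc'Rep hjsupp
    · obtain ⟨v, hv0, hvneg⟩ := farkas h (-g j) hmem
      have hvg : ∀ i : ι, 0 ≤ v (g i) := fun i => by
        have := hv0 (Sum.inl i); simpa [hh] using this
      have hvJ : ∀ i : ι, i ∈ Jstar → v (g i) = 0 := by
        intro i hi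
        have h1 := hv0 (Sum.inr (Sum.inl ⟨i, hi⟩))
        have h2 := hv0 (Sum.inr (Sum.inr ⟨i, hi⟩))
        simp only [hh, Sum.elim_inr, Sum.elim_inl, map_neg] at h1 h2
        linarith
      have hvV : v ∈ V := by
        refine ⟨hvg, ?_⟩
        have e1 : v x₀ = ∑ i, cstar i * v (g i) := by
          rw [← hcstarRep.2, map_sum]
          exact Finset.sum_congr rfl fun i _ => by rw [map_smul, smul_eq_mul]
        rw [e1]
        refine Finset.sum_eq_zero fun i _ => ?_
        by_cases hi : i ∈ Jstar
        · rw [hvJ i hi, mul_zero]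
        · have : cstar i = 0 := by
            by_contra hne
            exact hi (hcstarsupp ▸ Finset.mem_filter.2 ⟨Finset.mem_univ _, hne⟩)
          rw [this, zero_mul]
      have := hj v hvV
      rw [map_neg, this] at hvneg
      exact absurd hvneg (by norm_num)
  have hcstarpos : ∀ i : ι, i ∈ I → 0 < cstar i := by
    intro i hi
    have h1 : i ∈ Jstar := hIJ i hi
    rw [← hcstarsupp] at h1
    exact lt_of_le_of_ne (hcstarRep.1 i) (Ne.symm (Finset.mem_filter.1 h1).2)
  have hcstarzero : ∀ i : ι, i ∉ I → cstar i = 0 := by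
    intro i hi
    by_contra hne
    exact hi (hsuppI cstar hcstarRep i hne)
  -- decompose emb m over the TD generators
  set gD : {i : ι // i ∈ TD} → (Fin d → ℝ) := fun i => g ↑i with hgD
  have hmrange : emb d m ∈ Submodule.span ℝ (Set.range gD) := by
    have h1 : Submodule.span ℝ D ≤ Submodule.span ℝ (Set.range gD) := by
      rw [Submodule.span_le]
      intro x hx
      have hxC : x ∈ C := by rw [hDeq] at hx; exact hx.1
      have hx1 : x ∈ Submodule.span NNReal (Set.range g) := by rw [hCg] at hxC; exact hxC
      have hxℓ : ℓ x = 0 := by rw [hDeq] at hx; exact hx.2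
      have h2 := face_decomp ℓ (by rintro y ⟨i, rfl⟩; exact hℓpos _ (hgC i)) hx1 hxℓ
      have h3 : {y ∈ Set.range g | ℓ y = 0} ⊆ Set.range gD := by
        rintro _ ⟨⟨i, rfl⟩, h0⟩
        exact ⟨⟨i, Finset.mem_filter.2 ⟨Finset.mem_univ _, h0⟩⟩, rfl⟩
      have h4 := nnspan_subset_span h2
      exact Submodule.span_mono h3 h4
    exact h1 hmlatIn
  obtain ⟨cm, hcm⟩ := (Submodule.mem_span_range_iff_exists_fun ℝ).1 hmrange
  set Bm : ℝ := ∑ i, |cm i| with hBm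
  obtain ⟨K, hK⟩ := exists_nat_gt (Bm + 1)
  have hq1 : (1:ℝ) ≤ (q:ℝ) := by exact_mod_cast hq0
  have hcoefnn : ∀ i : {i : ι // i ∈ TD}, 0 ≤ (q:ℝ) * cm i + ((q:ℝ) * K - 1) := by
    intro i
    have h1 : |cm i| ≤ Bm :=
      Finset.single_le_sum (f := fun k => |cm k|) (fun k _ => abs_nonneg _) (Finset.mem_univ i)
    have h2 := (abs_le.1 h1).1
    nlinarith [hK]
  set z : Fin d → ℤ := m + K • w₀ with hz
  set s : Fin d → ℤ := u + (q : ℤ) • z with hs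
  set ν : ι → ℝ := fun i =>
    cstar i + (if h : i ∈ TD then (q:ℝ) * cm ⟨i, h⟩ + ((q:ℝ) * K - 1) else 0) with hν
  have hembz : emb d z = emb d m + (K : ℝ) • emb d w₀ := by
    funext i'
    simp only [hz, emb, AddMonoidHom.coe_mk, ZeroHom.coe_mk, Pi.add_apply, Pi.smul_apply,
      smul_eq_mul, nsmul_eq_mul, Pi.mul_apply, Pi.natCast_apply]
    push_cast
    ring
  have hembs : emb d s = x₀ + ((q:ℝ) • emb d m + ((q:ℝ) * K - 1) • emb d w₀) := by
    funext i'
    simp only [hs, hz, hx₀, emb, AddMonoidHom.coe_mk, ZeroHom.coe_mk, Pi.add_apply,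
      Pi.smul_apply, smul_eq_mul, Pi.sub_apply, nsmul_eq_mul, Pi.mul_apply, Pi.natCast_apply]
    push_cast
    ring
  have hνsum : ∑ i, ν i • g i = emb d s := by
    have e1 : ∑ i, ν i • g i = ∑ i, cstar i • g i +
        ∑ i, (if h : i ∈ TD then (q:ℝ) * cm ⟨i, h⟩ + ((q:ℝ) * K - 1) else 0) • g i := by
      rw [← Finset.sum_add_distrib]
      exact Finset.sum_congr rfl fun i _ => by simp only [hν]; rw [add_smul]
    have e2 : ∑ i, (if h : i ∈ TD then (q:ℝ) * cm ⟨i, h⟩ + ((q:ℝ) * K - 1) else 0) • g i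
        = ∑ i ∈ TD, (if h : i ∈ TD then (q:ℝ) * cm ⟨i, h⟩ + ((q:ℝ) * K - 1) else 0) • g i := by
      symm
      apply Finset.sum_subset (Finset.subset_univ _)
      intro i _ hi
      rw [dif_neg hi, zero_smul]
    have e3 : ∑ i ∈ TD, (if h : i ∈ TD then (q:ℝ) * cm ⟨i, h⟩ + ((q:ℝ) * K - 1) else 0) • g i
        = ∑ i : {i : ι // i ∈ TD}, ((q:ℝ) * cm i + ((q:ℝ) * K - 1)) • gD i := by
      rw [← Finset.sum_attach TD
        (fun i => (if h : i ∈ TD then (q:ℝ) * cm ⟨i, h⟩ + ((q:ℝ) * K - 1) else 0) • g i)]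
      refine Finset.sum_congr rfl fun i _ => ?_
      rw [dif_pos i.2]
    have e4 : ∑ i : {i : ι // i ∈ TD}, ((q:ℝ) * cm i + ((q:ℝ) * K - 1)) • gD i
        = (q:ℝ) • emb d m + ((q:ℝ) * K - 1) • emb d w₀ := by
      have e5 : ∑ i : {i : ι // i ∈ TD}, gD i = emb d w₀ := by
        rw [hembw₀, ← Finset.sum_attach TD (fun i => g i)]
        rfl
      calc ∑ i : {i : ι // i ∈ TD}, ((q:ℝ) * cm i + ((q:ℝ) * K - 1)) • gD i
          = ∑ i : {i : ι // i ∈ TD},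
              (((q:ℝ) * cm i) • gD i + ((q:ℝ) * K - 1) • gD i) :=
            Finset.sum_congr rfl fun i _ => add_smul _ _ _
        _ = ∑ i : {i : ι // i ∈ TD}, ((q:ℝ) * cm i) • gD i +
              ∑ i : {i : ι // i ∈ TD}, ((q:ℝ) * K - 1) • gD i := Finset.sum_add_distrib
        _ = (q:ℝ) • emb d m + ((q:ℝ) * K - 1) • emb d w₀ := by
            rw [← hcm, ← e5, Finset.smul_sum, Finset.smul_sum]
            congr 1
            exact Finset.sum_congr rfl fun i _ => (mul_smul _ _ _)
    rw [e1, e2, e3, e4, hcstarRep.2, ← hembs]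
  have hνzero : ∀ i : ι, i ∉ I → ν i = 0 := by
    intro i hi
    have h1 := hcstarzero i hi
    have h2 : i ∉ TD := fun h => hi (hIDI i h)
    simp only [hν, h1, dif_neg h2, add_zero]
  have hνposI : ∀ i : I, 0 < ν ↑i := by
    intro i
    have h1 := hcstarpos ↑i i.2
    simp only [hν]
    split_ifs with h
    · have := hcoefnn ⟨↑i, h⟩
      linarith
    · linarith
  haveI : Fintype I := Fintype.ofFinite I
  have hrestrict : ∑ i : I, ν ↑i • gI i = emb d s := by
    rw [← hνsum]
    have e1 : ∑ i : ι, ν i • g i = ∑ i ∈ I.toFinset, ν i • g i := by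
      symm
      apply Finset.sum_subset (Finset.subset_univ _)
      intro i _ hi
      rw [hνzero i (by simpa using hi), zero_smul]
    have e2 : ∑ i ∈ I.toFinset, ν i • g i = ∑ i : I, ν ↑i • gI i := by
      refine Finset.sum_subtype I.toFinset (fun x => Set.mem_toFinset) (fun i => ν i • g i)
    rw [e1, e2]
  have hsrelint : emb d s ∈ intrinsicInterior ℝ G' := by
    rw [hG'cone]
    exact allpos_mem_intrinsicInterior gI (fun i => ν ↑i) hνposI (emb d s) hrestrict
  have hslat : s ∈ latticeOf d S G' := by
    have hu' : u ∈ latticeOf d S G' := AddSubgroup.subset_closure ⟨hu, huG'⟩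
    have hw₀' : w₀ ∈ latticeOf d S G' := AddSubgroup.subset_closure ⟨hw₀S, hDG' hw₀D⟩
    rw [hs, hz]
    exact AddSubgroup.add_mem _ hu'
      (AddSubgroup.zsmul_mem _
        (AddSubgroup.add_mem _ hmG' (AddSubgroup.nsmul_mem _ hw₀' K)) (q:ℤ))
  have hsS : s ∈ S := (hsn G' hG'face s hsrelint).2 hslat
  have hdvd : ∀ i', (q:ℤ) ∣ a i' + s i' := by
    intro i'
    refine ⟨w i' + z i', ?_⟩
    have h1 := heq i'
    simp only [hs, Pi.add_apply, Pi.smul_apply, smul_eq_mul]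
    linarith [h1]
  have hyS := hhom s hsS hdvd
  have hyeq : (fun i' => (a i' + s i') / (q:ℤ)) = w + z := by
    funext i'
    have h1 := heq i'
    have h2 : a i' + s i' = (q:ℤ) * (w i' + z i') := by
      simp only [hs, Pi.add_apply, Pi.smul_apply, smul_eq_mul]
      linarith [h1]
    rw [h2]
    exact Int.mul_ediv_cancel_left _ (by exact_mod_cast hq0.ne')
  rw [hyeq] at hyS
  have hℓm : ℓ (emb d m) = 0 := by
    have h1 : Submodule.span ℝ D ≤ LinearMap.ker ℓ := by
      rw [Submodule.span_le]
      intro x hx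
      rw [hDeq] at hx
      exact hx.2
    exact h1 hmlatIn
  have hℓw : ℓ (emb d w) = 0 := by rw [hDeq] at hwD; exact hwD.2
  have hℓwz : ℓ (emb d (w + z)) = 0 := by
    rw [map_add, map_add, hembz, map_add, map_smul]
    rw [hℓw, hℓm, hℓw₀]
    simp
  have hwzD : emb d (w + z) ∈ D := by
    rw [hDeq]; exact ⟨hSC _ hyS, hℓwz⟩
  have hwzlat : (w + z) ∈ latticeOf d S D := AddSubgroup.subset_closure ⟨hyS, hwzD⟩
  have hwlat : w ∈ latticeOf d S D := AddSubgroup.subset_closure ⟨hw, hwD⟩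
  have hw₀lat : w₀ ∈ latticeOf d S D := AddSubgroup.subset_closure ⟨hw₀S, hw₀D⟩
  have hmlat : m ∈ latticeOf d S D := by
    have hmid : m = (w + z) - w - K • w₀ := by rw [hz]; abel
    rw [hmid]
    exact AddSubgroup.sub_mem _ (AddSubgroup.sub_mem _ hwzlat hwlat)
      (AddSubgroup.nsmul_mem _ hw₀lat K)
  exact hmnot hmlat
end
end
end

section
/- Let R = k[S] be a seminormal monoid algebra over a perfect field k of characteristic p > 0, and g = α₁x^{u₁} + ⋯ + α_n x^{u_n} with distinct u_i ∈ S and α_i ∈ k^×. If q = p^e is large enough that u_i − u_j ∉ qM for all i ≠ j, then for any a ∈ (1/q)M and u ∈ (1/q)S, at most one of the terms π_a(x^{u + u_i/q}) is nonzero; hence π_a(g^{1/q} x^u) is a monomial (possibly zero). -/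
/-- Monomial lemma: let `R = k[S]` for `S ⊆ ℤ^d`, and let `u₁, …, uₙ ∈ S` be distinct
exponents of a polynomial `g = Σ αᵢ x^{uᵢ}`.  If `q = pᵉ` is large enough that
`uᵢ − uⱼ ∉ qM` for all `i ≠ j`, then for any `a ∈ (1/q)ℤ^d` and `w ∈ (1/q)S` (both
encoded by numerator vectors) at most one of the terms `π_a(x^{w + uᵢ/q})` is nonzero
(`π_a(x^{w + uᵢ/q}) ≠ 0` meaning `q ∣ a + w + uᵢ` coordinatewise); hence
`π_a(g^{1/q} x^w)` is a monomial (possibly zero). -/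
theorem stmt_18 (d n : ℕ) (p : ℕ) (hp : p.Prime) (e : ℕ) (q : ℕ) (hq : q = p ^ e)
    (S : AddSubmonoid (Fin d → ℤ))
    (u : Fin n → Fin d → ℤ) (hu : ∀ i, u i ∈ S)
    (hdist : ∀ i j, i ≠ j → ¬ (∀ k, (q : ℤ) ∣ u i k - u j k))
    (a w : Fin d → ℤ) (hw : w ∈ S) :
    ∀ i j : Fin n, (∀ k, (q : ℤ) ∣ a k + w k + u i k) →
      (∀ k, (q : ℤ) ∣ a k + w k + u j k) → i = j := by
  intro i j hi hj
  by_contra hij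
  exact hdist i j hij (fun k => by
    have := (hi k).sub (hj k)
    simpa using this)
end
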